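/- For any B ∈ ℕ and ε > 0, there is a constant C(ε,B) such that for all integers Q, X ≥ 1 with Q ≤ 2·X^(1/B), one has ∑_{|ℓ| ≤ X} d(ℓ,Q)^B ≤ C(ε,B) · Q^ε · X, where the sum is over integers ℓ with |ℓ| ≤ X. -/

import Mathlib

lemma divisor_bound {δ : ℝ} (hδ : 0 < δ) :
    ∃ C : ℝ, 1 ≤ C ∧ ∀ n : ℕ, n ≠ 0 → ((n.divisors.card : ℝ)) ≤ C * (n : ℝ) ^ δ := by
  have hlog2 : (0:ℝ) < Real.log 2 := Real.log_pos (by norm_num)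
  set K : ℝ := max 1 (1/(δ * Real.log 2)) with hK
  have hK1 : 1 ≤ K := le_max_left _ _
  set P : ℕ := ⌈(2:ℝ) ^ (1/δ)⌉₊ with hP
  refine ⟨K ^ P, one_le_pow₀ hK1, fun n hn => ?_⟩
  rw [Nat.card_divisors hn]
  push_cast
  -- per-prime bound
  have key : ∀ p ∈ n.primeFactors,
      ((n.factorization p : ℝ) + 1) ≤ (if p < P then K else 1) * ((p : ℝ) ^ (n.factorization p : ℕ)) ^ δ := by
    intro p hp
    have hpp : p.Prime := Nat.prime_of_mem_primeFactors hp
    have hp2 : (2:ℝ) ≤ (p:ℝ) := by exact_mod_cast hpp.two_le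
    set a : ℕ := n.factorization p with ha
    have hpa : (2:ℝ) ^ (a:ℕ) ≤ (p:ℝ) ^ (a:ℕ) := pow_le_pow_left₀ (by norm_num) hp2 a
    have hppos : (0:ℝ) < (p:ℝ) := by positivity
    split_ifs with hlt
    · -- small prime: a+1 ≤ K * (p^a)^δ
      have h1 : (1:ℝ) + (a:ℝ) * (δ * Real.log 2) ≤ ((p:ℝ) ^ (a:ℕ)) ^ δ := by
        have : ((2:ℝ) ^ (a:ℕ)) ^ δ ≤ ((p:ℝ) ^ (a:ℕ)) ^ δ :=
          Real.rpow_le_rpow (by positivity) hpa hδ.le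
        refine le_trans ?_ this
        rw [← Real.rpow_natCast 2 a, ← Real.rpow_mul (by norm_num)]
        rw [Real.rpow_def_of_pos (by norm_num)]
        calc (1:ℝ) + (a:ℝ) * (δ * Real.log 2) = 1 + ((a:ℝ) * δ * Real.log 2) := by ring
        _ ≤ Real.exp ((a:ℝ) * δ * Real.log 2) := by
            have := Real.add_one_le_exp ((a:ℝ) * δ * Real.log 2)
            linarith
        _ = Real.exp (Real.log 2 * ((a:ℝ) * δ)) := by ring_nf
      have hKd : 1 ≤ K * (δ * Real.log 2) := by
        have : 1/(δ * Real.log 2) ≤ K := le_max_right _ _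
        have hd : (0:ℝ) < δ * Real.log 2 := by positivity
        calc (1:ℝ) = (1/(δ * Real.log 2)) * (δ * Real.log 2) := by field_simp
        _ ≤ K * (δ * Real.log 2) := by nlinarith
      calc (a:ℝ) + 1 ≤ K * (1 + (a:ℝ) * (δ * Real.log 2)) := by nlinarith [hK1, (Nat.cast_nonneg a : (0:ℝ) ≤ (a:ℝ)), hKd]
      _ ≤ K * ((p:ℝ) ^ (a:ℕ)) ^ δ := by
          have h0 : (0:ℝ) ≤ K := by linarith
          nlinarith [h1]
    · -- large prime: a+1 ≤ (p^a)^δ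
      have hPle : ((2:ℝ) ^ (1/δ)) ≤ (p:ℝ) := by
        have := Nat.le_ceil ((2:ℝ) ^ (1/δ))
        have hp' : (P:ℝ) ≤ (p:ℝ) := by exact_mod_cast not_lt.mp hlt
        linarith
      have h2 : (2:ℝ) ≤ (p:ℝ) ^ δ := by
        have := Real.rpow_le_rpow (by positivity) hPle hδ.le
        rwa [← Real.rpow_mul (by norm_num), one_div_mul_cancel hδ.ne', Real.rpow_one] at this
      have h3 : ((p:ℝ) ^ (a:ℕ)) ^ δ = ((p:ℝ) ^ δ) ^ (a:ℕ) := by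
        rw [← Real.rpow_natCast (p:ℝ) a, ← Real.rpow_mul hppos.le, mul_comm,
          Real.rpow_mul hppos.le, Real.rpow_natCast]
      rw [one_mul, h3]
      have h4 : ((2:ℝ)) ^ (a:ℕ) ≤ ((p:ℝ) ^ δ) ^ (a:ℕ) := pow_le_pow_left₀ (by norm_num) h2 a
      have h5 : (a:ℝ) + 1 ≤ (2:ℝ) ^ (a:ℕ) := by
        exact_mod_cast Nat.succ_le_of_lt (Nat.lt_two_pow_self (n := a))
      linarith
  have h6 : ∏ p ∈ n.primeFactors, (if p < P then K else (1:ℝ)) ≤ K ^ P := by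
    rw [Finset.prod_ite, Finset.prod_const, Finset.prod_const_one, mul_one]
    refine pow_le_pow_right₀ hK1 ?_
    have : (n.primeFactors.filter (· < P)) ⊆ Finset.range P := by
      intro p hp
      simp only [Finset.mem_filter] at hp
      exact Finset.mem_range.mpr hp.2
    simpa using Finset.card_le_card this
  have h7 : ∏ p ∈ n.primeFactors, ((p:ℝ) ^ (n.factorization p : ℕ)) ^ δ = (n:ℝ) ^ δ := by
    rw [Real.finset_prod_rpow _ _ (fun p _ => by positivity) δ]
    congr 1
    have : ∏ p ∈ n.primeFactors, (p:ℕ) ^ n.factorization p = n := by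
      rw [← Nat.support_factorization]
      exact Nat.factorization_prod_pow_eq_self hn
    exact_mod_cast congrArg (Nat.cast : ℕ → ℝ) this
  calc ∏ p ∈ n.primeFactors, ((n.factorization p : ℝ) + 1)
      ≤ ∏ p ∈ n.primeFactors, ((if p < P then K else 1) * ((p:ℝ) ^ (n.factorization p : ℕ)) ^ δ) :=
        Finset.prod_le_prod (fun p _ => by positivity) key
    _ = (∏ p ∈ n.primeFactors, (if p < P then K else (1:ℝ))) *
        ∏ p ∈ n.primeFactors, ((p:ℝ) ^ (n.factorization p : ℕ)) ^ δ := Finset.prod_mul_distrib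
    _ ≤ K ^ P * (n:ℝ) ^ δ := by
        rw [h7]
        have : (0:ℝ) ≤ (n:ℝ) ^ δ := by positivity
        nlinarith [h6, Finset.prod_nonneg (fun p (_ : p ∈ n.primeFactors) =>
          (by positivity : (0:ℝ) ≤ (if p < P then K else 1)))]
open Finset

lemma sum_inv_le (M : ℕ) : ∑ m ∈ Icc 1 M, (m:ℝ)⁻¹ ≤ 1 + Real.log M := by
  have h : ∑ m ∈ Icc 1 M, (m:ℝ)⁻¹ = (harmonic M : ℝ) := by
    rw [harmonic]
    push_cast
    rw [← Finset.Ico_add_one_right_eq_Icc, Finset.sum_Ico_eq_sum_range]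
    simp [add_comm]
  rw [h]
  exact harmonic_le_one_add_log M

lemma core_count (B Q X : ℕ) (hB : 1 ≤ B) (hQ : 1 ≤ Q) :
    ∑ n ∈ Icc 1 X, ((((Icc 1 Q).filter (· ∣ n)).card : ℝ)) ^ B ≤
      (X : ℝ) * ∑ m ∈ Icc 1 (Q ^ B), ((m.divisors.card : ℝ)) ^ B / m := by
  classical
  set T : Finset (Fin B → ℕ) := Fintype.piFinset (fun _ => Icc 1 Q) with hT
  -- step 1 : the ℕ sum equals ∑_{f ∈ T} X / lcm f
  have step1 : ∑ n ∈ Icc 1 X, (((Icc 1 Q).filter (· ∣ n)).card) ^ B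
      = ∑ f ∈ T, X / (Finset.univ.lcm f) := by
    have e1 : ∀ n, (((Icc 1 Q).filter (· ∣ n)).card) ^ B
        = (T.filter (fun f => ∀ i, f i ∣ n)).card := by
      intro n
      rw [← Fintype.card_piFinset_const]
      congr 1
      ext f
      simp only [Fintype.mem_piFinset, Finset.mem_filter, T]
      exact ⟨fun h => ⟨fun i => (h i).1, fun i => (h i).2⟩, fun h i => ⟨h.1 i, h.2 i⟩⟩
    simp only [e1]
    simp only [Finset.card_filter]
    rw [Finset.sum_comm]
    refine Finset.sum_congr rfl fun f hf => ?_
    rw [← Finset.card_filter]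
    have hicc : Icc 1 X = Ioc 0 X := by ext n; simp; omega
    have hpred : (Icc 1 X).filter (fun n => ∀ i, f i ∣ n)
        = (Ioc 0 X).filter (fun n => Finset.univ.lcm f ∣ n) := by
      rw [hicc]
      refine Finset.filter_congr fun n _ => ?_
      constructor
      · intro h; exact Finset.lcm_dvd (fun i _ => h i)
      · intro h i; exact dvd_trans (Finset.dvd_lcm (Finset.mem_univ i)) h
    rw [hpred, Nat.Ioc_filter_dvd_card_eq_div]
  have hmem : ∀ f ∈ T, Finset.univ.lcm f ∈ Icc 1 (Q ^ B) := by
    intro f hf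
    simp only [Fintype.mem_piFinset, Finset.mem_Icc, T] at hf
    have hprodpos : 0 < ∏ i, f i :=
      Finset.prod_pos fun i _ => (hf i).1
    have hdvd : Finset.univ.lcm f ∣ ∏ i, f i :=
      Finset.lcm_dvd fun i _ => Finset.dvd_prod_of_mem f (Finset.mem_univ i)
    have hL1 : 1 ≤ Finset.univ.lcm f := Nat.pos_of_ne_zero fun h => by
      rw [h] at hdvd
      exact absurd (Nat.eq_zero_of_zero_dvd hdvd) (by omega)
    have hLle : Finset.univ.lcm f ≤ Q ^ B := by
      refine le_trans (Nat.le_of_dvd hprodpos hdvd) ?_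
      have h9 : ∏ i : Fin B, f i ≤ ∏ _i : Fin B, Q :=
        Finset.prod_le_prod' fun i _ => (hf i).2
      simpa [Finset.prod_const] using h9
    exact Finset.mem_Icc.mpr ⟨hL1, hLle⟩
  calc ∑ n ∈ Icc 1 X, ((((Icc 1 Q).filter (· ∣ n)).card : ℝ)) ^ B
      = ((∑ n ∈ Icc 1 X, (((Icc 1 Q).filter (· ∣ n)).card) ^ B : ℕ) : ℝ) := by push_cast; rfl
    _ = ∑ f ∈ T, ((X / (Finset.univ.lcm f) : ℕ) : ℝ) := by rw [step1]; push_cast; rfl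
    _ ≤ ∑ f ∈ T, (X : ℝ) / (Finset.univ.lcm f) :=
        Finset.sum_le_sum fun f _ => Nat.cast_div_le
    _ = ∑ m ∈ Icc 1 (Q ^ B), ∑ f ∈ T.filter (fun f => Finset.univ.lcm f = m),
          (X : ℝ) / (Finset.univ.lcm f) :=
        (Finset.sum_fiberwise_of_maps_to hmem _).symm
    _ ≤ (X : ℝ) * ∑ m ∈ Icc 1 (Q ^ B), ((m.divisors.card : ℝ)) ^ B / m := by
        rw [Finset.mul_sum]
        refine Finset.sum_le_sum fun m hm => ?_
        have hm1 : 1 ≤ m := (Finset.mem_Icc.mp hm).1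
        have hcard : (T.filter (fun f => Finset.univ.lcm f = m)).card ≤ m.divisors.card ^ B := by
          rw [← Fintype.card_piFinset_const]
          refine Finset.card_le_card ?_
          intro f hf
          simp only [Finset.mem_filter, Fintype.mem_piFinset] at hf ⊢
          intro i
          rw [Nat.mem_divisors]
          exact ⟨hf.2 ▸ Finset.dvd_lcm (Finset.mem_univ i), by omega⟩
        calc ∑ f ∈ T.filter (fun f => Finset.univ.lcm f = m), (X : ℝ) / (Finset.univ.lcm f)
            = ∑ _f ∈ T.filter (fun f => Finset.univ.lcm f = m), (X : ℝ) / m := by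
              refine Finset.sum_congr rfl fun f hf => ?_
              rw [(Finset.mem_filter.mp hf).2]
          _ = ((T.filter (fun f => Finset.univ.lcm f = m)).card : ℝ) * ((X:ℝ) / m) := by
              rw [Finset.sum_const, nsmul_eq_mul]
          _ ≤ ((m.divisors.card : ℝ)) ^ B * ((X:ℝ) / m) := by
              have : ((T.filter (fun f => Finset.univ.lcm f = m)).card : ℝ) ≤ ((m.divisors.card : ℝ)) ^ B := by
                exact_mod_cast hcard
              have hx : (0:ℝ) ≤ (X:ℝ) / m := by positivity
              nlinarith
          _ = (X : ℝ) * (((m.divisors.card : ℝ)) ^ B / m) := by ring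
open Finset

lemma card_int_eq (Q : ℕ) (ℓ : ℤ) :
    ((Icc (1:ℤ) (Q:ℤ)).filter (fun d => d ∣ ℓ)).card
      = ((Icc 1 Q).filter (· ∣ ℓ.natAbs)).card := by
  refine Finset.card_bij' (fun d _ => d.toNat) (fun n _ => (n : ℤ)) ?_ ?_ ?_ ?_
  · intro d hd
    simp only [Finset.mem_filter, Finset.mem_Icc] at hd ⊢
    obtain ⟨⟨h1, h2⟩, h3⟩ := hd
    refine ⟨⟨by omega, by omega⟩, ?_⟩
    have h4 : d.natAbs ∣ ℓ.natAbs := Int.natAbs_dvd_natAbs.mpr h3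
    have h5 : d.natAbs = d.toNat := by omega
    rwa [h5] at h4
  · intro n hn
    simp only [Finset.mem_filter, Finset.mem_Icc] at hn ⊢
    obtain ⟨⟨h1, h2⟩, h3⟩ := hn
    refine ⟨⟨by exact_mod_cast h1, by exact_mod_cast h2⟩, ?_⟩
    have : (n:ℤ) ∣ (ℓ.natAbs : ℤ) := Int.natCast_dvd_natCast.mpr h3
    exact this.trans (Int.natAbs_dvd.mpr dvd_rfl)
  · intro d hd
    simp only [Finset.mem_filter, Finset.mem_Icc] at hd
    show ((d.toNat : ℤ)) = d
    omega
  · intro n hn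
    simp

lemma sum_symm (X : ℕ) (H : ℕ → ℝ) :
    ∑ ℓ ∈ Icc (-(X:ℤ)) (X:ℤ), H ℓ.natAbs = H 0 + 2 * ∑ n ∈ Icc 1 X, H n := by
  have hsplit : Icc (-(X:ℤ)) (X:ℤ) = Icc (-(X:ℤ)) (-1) ∪ Icc 0 (X:ℤ) := by
    ext ℓ; simp only [Finset.mem_union, Finset.mem_Icc]; omega
  have hdisj : Disjoint (Icc (-(X:ℤ)) (-1)) (Icc (0:ℤ) (X:ℤ)) := by
    rw [Finset.disjoint_left]
    intro a ha hb
    simp only [Finset.mem_Icc] at ha hb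
    omega
  rw [hsplit, Finset.sum_union hdisj]
  have h2 : ∑ ℓ ∈ Icc (1:ℤ) (X:ℤ), H ℓ.natAbs = ∑ n ∈ Icc 1 X, H n := by
    refine Finset.sum_bij' (fun ℓ _ => ℓ.natAbs) (fun n _ => (n:ℤ)) ?_ ?_ ?_ ?_ ?_
    · intro ℓ hℓ; simp only [Finset.mem_Icc] at hℓ ⊢; omega
    · intro n hn; simp only [Finset.mem_Icc] at hn ⊢; omega
    · intro ℓ hℓ; simp only [Finset.mem_Icc] at hℓ
      show ((ℓ.natAbs : ℤ)) = ℓ; omega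
    · intro n hn; simp
    · intro ℓ hℓ; rfl
  have h1 : ∑ ℓ ∈ Icc (-(X:ℤ)) (-1), H ℓ.natAbs = ∑ ℓ ∈ Icc (1:ℤ) (X:ℤ), H ℓ.natAbs := by
    refine Finset.sum_bij' (fun ℓ _ => -ℓ) (fun ℓ _ => -ℓ) ?_ ?_ ?_ ?_ ?_
    · intro ℓ hℓ; simp only [Finset.mem_Icc] at hℓ ⊢; omega
    · intro ℓ hℓ; simp only [Finset.mem_Icc] at hℓ ⊢; omega
    · intro ℓ _; ring
    · intro ℓ _; ring
    · intro ℓ _; rw [Int.natAbs_neg]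
  have h3 : Icc (0:ℤ) (X:ℤ) = insert 0 (Icc 1 (X:ℤ)) := by
    ext ℓ; simp only [Finset.mem_insert, Finset.mem_Icc]; omega
  rw [h1, h3, Finset.sum_insert (by simp), h2]
  norm_num
  ring

open Finset

/-- Moment bound for the truncated divisor function:
`∑_{|ℓ| ≤ X} d(ℓ,Q)^B ≤ C(ε,B) Q^ε X` whenever `Q ≤ 2 X^{1/B}`. -/
theorem stmt_1 (B : ℕ) (ε : ℝ) (hε : 0 < ε) :
    ∃ C : ℝ, 0 < C ∧ ∀ Q X : ℕ, 1 ≤ Q → 1 ≤ X →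
      (Q : ℝ) ≤ 2 * (X : ℝ) ^ ((1 : ℝ) / B) →
      ∑ ℓ ∈ Finset.Icc (-(X : ℤ)) (X : ℤ),
          ((((Finset.Icc (1 : ℤ) (Q : ℤ)).filter (fun d => d ∣ ℓ)).card : ℝ)) ^ B
        ≤ C * (Q : ℝ) ^ ε * (X : ℝ) := by
  rcases Nat.eq_zero_or_pos B with hB0 | hB
  · -- B = 0 case
    subst hB0
    refine ⟨3, by norm_num, fun Q X hQ hX _ => ?_⟩
    have hQe : (1:ℝ) ≤ (Q:ℝ) ^ ε :=
      Real.one_le_rpow (by exact_mod_cast hQ) hε.le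
    have hX' : (1:ℝ) ≤ (X:ℝ) := by exact_mod_cast hX
    simp only [pow_zero]
    rw [Finset.sum_const, Int.card_Icc]
    have : ((X:ℤ) + 1 - -(X:ℤ)).toNat = 2 * X + 1 := by omega
    rw [this]
    simp only [nsmul_eq_mul, mul_one]
    push_cast
    nlinarith
  · -- B ≥ 1
    have hBR : (0:ℝ) < (B:ℝ) := by exact_mod_cast hB
    obtain ⟨C₀, hC₀1, hC₀⟩ := divisor_bound (δ := ε/(2*B*B)) (by positivity)
    set D : ℝ := C₀ ^ B * (1 + 2*B/ε) with hD
    have hDpos : 0 < D := by positivity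
    refine ⟨2^B + 2*D, by positivity, fun Q X hQ hX hQX => ?_⟩
    have hQR : (1:ℝ) ≤ (Q:ℝ) := by exact_mod_cast hQ
    have hXR : (1:ℝ) ≤ (X:ℝ) := by exact_mod_cast hX
    have hQe : (1:ℝ) ≤ (Q:ℝ) ^ (ε/2) := Real.one_le_rpow hQR (by positivity)
    have hQe2 : (1:ℝ) ≤ (Q:ℝ) ^ ε := Real.one_le_rpow hQR hε.le
    -- inner divisor-sum bound
    have key : ∑ m ∈ Icc 1 (Q ^ B), ((m.divisors.card : ℝ)) ^ B / m ≤ D * (Q:ℝ)^ε := by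
      have hmb : ∀ m ∈ Icc 1 (Q ^ B), ((m.divisors.card : ℝ)) ^ B / m
          ≤ C₀ ^ B * (Q:ℝ)^(ε/2) * (m:ℝ)⁻¹ := by
        intro m hm
        rw [Finset.mem_Icc] at hm
        have hm1 : (1:ℝ) ≤ (m:ℝ) := by exact_mod_cast hm.1
        have hmQ : (m:ℝ) ≤ ((Q:ℝ))^(B:ℕ) := by
          have := hm.2; exact_mod_cast this
        have h1 : ((m.divisors.card : ℝ)) ≤ C₀ * (m:ℝ) ^ (ε/(2*B*B)) :=
          hC₀ m (by omega)
        have h2 : ((m.divisors.card : ℝ)) ^ B ≤ (C₀ * (m:ℝ) ^ (ε/(2*B*B))) ^ B :=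
          pow_le_pow_left₀ (by positivity) h1 B
        have h3 : ((m:ℝ) ^ (ε/(2*B*B))) ^ (B:ℕ) = (m:ℝ) ^ ((B:ℝ) * (ε/(2*B*B))) := by
          rw [← Real.rpow_natCast ((m:ℝ) ^ (ε/(2*B*B))) B, ← Real.rpow_mul (by positivity),
            mul_comm]
        have h4 : (m:ℝ) ^ ((B:ℝ) * (ε/(2*B*B))) ≤ ((Q:ℝ)^(B:ℕ)) ^ ((B:ℝ) * (ε/(2*B*B))) :=
          Real.rpow_le_rpow (by positivity) hmQ (by positivity)
        have h5 : ((Q:ℝ)^(B:ℕ)) ^ ((B:ℝ) * (ε/(2*B*B))) = (Q:ℝ) ^ (ε/2) := by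
          rw [← Real.rpow_natCast (Q:ℝ) B, ← Real.rpow_mul (by positivity)]
          congr 1
          field_simp
        rw [div_eq_mul_inv]
        have hb : ((m.divisors.card : ℝ)) ^ B ≤ C₀ ^ B * (Q:ℝ)^(ε/2) := by
          calc ((m.divisors.card : ℝ)) ^ B ≤ (C₀ * (m:ℝ) ^ (ε/(2*B*B))) ^ B := h2
            _ = C₀ ^ B * ((m:ℝ) ^ (ε/(2*B*B))) ^ B := mul_pow _ _ _
            _ ≤ C₀ ^ B * (Q:ℝ)^(ε/2) := by
                rw [h3]
                have hC0B : (0:ℝ) ≤ C₀ ^ B := by positivity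
                rw [← h5]
                nlinarith [h4]
        have hminv : (0:ℝ) ≤ (m:ℝ)⁻¹ := by positivity
        nlinarith [hb]
      calc ∑ m ∈ Icc 1 (Q ^ B), ((m.divisors.card : ℝ)) ^ B / m
          ≤ ∑ m ∈ Icc 1 (Q ^ B), C₀ ^ B * (Q:ℝ)^(ε/2) * (m:ℝ)⁻¹ :=
            Finset.sum_le_sum hmb
        _ = C₀ ^ B * (Q:ℝ)^(ε/2) * ∑ m ∈ Icc 1 (Q ^ B), (m:ℝ)⁻¹ := by
            rw [Finset.mul_sum]
        _ ≤ C₀ ^ B * (Q:ℝ)^(ε/2) * ((1 + 2*B/ε) * (Q:ℝ)^(ε/2)) := by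
            have hs := sum_inv_le (Q ^ B)
            have hlog : Real.log ((Q:ℕ)^B : ℕ) = B * Real.log Q := by
              push_cast
              rw [Real.log_pow]
            have hlogQ : Real.log Q ≤ (Q:ℝ)^(ε/2) / (ε/2) :=
              Real.log_natCast_le_rpow_div Q (by positivity)
            have h7 : (1:ℝ) + Real.log ((Q:ℕ)^B : ℕ) ≤ (1 + 2*B/ε) * (Q:ℝ)^(ε/2) := by
              rw [hlog]
              have hB0 : (0:ℝ) ≤ (B:ℝ) := by positivity
              have : (B:ℝ) * Real.log Q ≤ (B:ℝ) * ((Q:ℝ)^(ε/2) / (ε/2)) := by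
                apply mul_le_mul_of_nonneg_left hlogQ hB0
              have heq : (B:ℝ) * ((Q:ℝ)^(ε/2) / (ε/2)) = (2*B/ε) * (Q:ℝ)^(ε/2) := by
                field_simp
              nlinarith
            have hsum_le : ∑ m ∈ Icc 1 (Q ^ B), (m:ℝ)⁻¹ ≤ (1 + 2*B/ε) * (Q:ℝ)^(ε/2) :=
              le_trans hs h7
            have hpos : (0:ℝ) ≤ C₀ ^ B * (Q:ℝ)^(ε/2) := by positivity
            exact mul_le_mul_of_nonneg_left hsum_le hpos
        _ = D * (Q:ℝ)^ε := by
            have hqq : (Q:ℝ)^(ε/2) * (Q:ℝ)^(ε/2) = (Q:ℝ)^ε := by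
              rw [← Real.rpow_add (by linarith : (0:ℝ) < (Q:ℝ)), add_halves]
            rw [hD, ← hqq]
            ring
    -- reduce the ℤ-sum to the ℕ-sum
    set H : ℕ → ℝ := fun n => ((((Icc 1 Q).filter (· ∣ n)).card : ℝ)) ^ B with hH
    have hred : ∑ ℓ ∈ Finset.Icc (-(X : ℤ)) (X : ℤ),
          ((((Finset.Icc (1 : ℤ) (Q : ℤ)).filter (fun d => d ∣ ℓ)).card : ℝ)) ^ B
        = H 0 + 2 * ∑ n ∈ Icc 1 X, H n := by
      rw [← sum_symm X H]
      refine Finset.sum_congr rfl fun ℓ _ => ?_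
      rw [hH]
      simp only [card_int_eq Q ℓ]
    have hH0 : H 0 = (Q:ℝ) ^ B := by
      rw [hH]
      have : (Icc 1 Q).filter (· ∣ 0) = Icc 1 Q :=
        Finset.filter_true_of_mem fun d _ => dvd_zero d
      simp [this, Nat.card_Icc]
    -- the ℓ = 0 term
    have hzero : (Q:ℝ) ^ B ≤ 2^B * (X:ℝ) := by
      have h8 : (Q:ℝ)^(B:ℕ) ≤ (2 * (X : ℝ) ^ ((1 : ℝ) / B))^(B:ℕ) :=
        pow_le_pow_left₀ (by positivity) hQX B
      have h9 : ((X : ℝ) ^ ((1 : ℝ) / B))^(B:ℕ) = (X:ℝ) := by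
        rw [← Real.rpow_natCast ((X : ℝ) ^ ((1 : ℝ) / B)) B, ← Real.rpow_mul (by positivity)]
        rw [one_div, inv_mul_cancel₀ (by positivity), Real.rpow_one]
      calc (Q:ℝ) ^ B ≤ (2 * (X : ℝ) ^ ((1 : ℝ) / B))^(B:ℕ) := h8
        _ = 2^B * (X:ℝ) := by rw [mul_pow, h9]
    have hcore := core_count B Q X hB hQ
    rw [hred, hH0]
    have hsum : ∑ n ∈ Icc 1 X, H n ≤ (X:ℝ) * (D * (Q:ℝ)^ε) := by
      refine le_trans hcore ?_
      exact mul_le_mul_of_nonneg_left key (by positivity)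
    have h2B : (0:ℝ) ≤ (2:ℝ)^B * (X:ℝ) := by positivity
    have h10 : (2:ℝ)^B * (X:ℝ) ≤ 2^B * (X:ℝ) * (Q:ℝ)^ε := by nlinarith [hQe2, h2B]
    calc (Q:ℝ) ^ B + 2 * ∑ n ∈ Icc 1 X, H n
        ≤ 2^B * (X:ℝ) + 2 * ((X:ℝ) * (D * (Q:ℝ)^ε)) := by linarith [hsum, hzero]
      _ ≤ 2^B * (X:ℝ) * (Q:ℝ)^ε + 2 * ((X:ℝ) * (D * (Q:ℝ)^ε)) := by linarith [h10]
      _ = (2^B + 2*D) * (Q : ℝ) ^ ε * (X : ℝ) := by ring
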